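/- For each real n > 0, let p*(n) denote the unique positive real solution of n² = p²((4/3)p + 1) (equivalently, the unique minimizer over p > 0 of N(p) = n³/p + 6n² + n(p+1)(2p+1)/3). Then p*(n)/n^{2/3} → (3/4)^{1/3} as n → ∞. -/

import Mathlib

open Filter

/-- If `p*(n)` denotes, for each real `n > 0`, the unique positive real
solution of `n² = p²((4/3)p + 1)` (the minimizer of `N(p) = n³/p + 6n² + n(p+1)(2p+1)/3`
over `p > 0`), then `p*(n)/n^{2/3} → (3/4)^{1/3}` as `n → ∞`. -/
theorem cCG_optimal_processors_asymptotics
    (pstar : ℝ → ℝ)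
    (hpstar : ∀ n : ℝ, 0 < n →
      0 < pstar n ∧ n ^ 2 = (pstar n) ^ 2 * ((4 / 3) * pstar n + 1)) :
    Tendsto (fun n : ℝ => pstar n / n ^ ((2 : ℝ) / 3)) atTop
      (nhds ((3 / 4 : ℝ) ^ ((1 : ℝ) / 3))) := by
  set c : ℝ := (3 / 4 : ℝ) ^ ((1 : ℝ) / 3) with hc_def
  have hc : 0 < c := Real.rpow_pos_of_pos (by norm_num) _
  have hc1 : c ≤ 1 := Real.rpow_le_one (by norm_num) (by norm_num) (by norm_num)
  have hc3 : c ^ (3 : ℕ) = 3 / 4 := by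
    rw [hc_def, ← Real.rpow_natCast ((3 / 4 : ℝ) ^ ((1 : ℝ) / 3)) 3,
      ← Real.rpow_mul (by norm_num)]
    norm_num
  -- cube equation
  have key : ∀ n : ℝ, 0 < n → (4 / 3) * (pstar n) ^ 3 + (pstar n) ^ 2 = n ^ 2 := by
    intro n hn
    have h := (hpstar n hn).2
    nlinarith [h]
  -- cube root identity
  have cube_root : ∀ x : ℝ, 0 ≤ x → (x ^ (3 : ℕ)) ^ ((1 : ℝ) / 3) = x := by
    intro x hx
    rw [← Real.rpow_natCast x 3, ← Real.rpow_mul hx]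
    norm_num
  have sq23 : ∀ n : ℝ, 0 < n → (n ^ (2 : ℕ)) ^ ((1 : ℝ) / 3) = n ^ ((2 : ℝ) / 3) := by
    intro n hn
    rw [← Real.rpow_natCast n 2, ← Real.rpow_mul hn.le]
    norm_num
  -- upper bound
  have hub : ∀ n : ℝ, 0 < n → pstar n ≤ c * n ^ ((2 : ℝ) / 3) := by
    intro n hn
    have hp := (hpstar n hn).1
    have h1 : (pstar n) ^ (3 : ℕ) ≤ (3 / 4) * n ^ 2 := by
      nlinarith [key n hn, sq_nonneg (pstar n)]
    have h2 : ((pstar n) ^ (3 : ℕ)) ^ ((1 : ℝ) / 3) ≤ ((3 / 4) * n ^ 2) ^ ((1 : ℝ) / 3) :=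
      Real.rpow_le_rpow (by positivity) h1 (by norm_num)
    rw [cube_root _ hp.le] at h2
    rw [Real.mul_rpow (by norm_num) (by positivity), sq23 n hn] at h2
    exact h2
  -- lower bound function
  set g : ℝ → ℝ := fun n => c * (1 - c ^ 2 * n ^ (-((2 : ℝ) / 3))) ^ ((1 : ℝ) / 3) with hg_def
  have hlb : ∀ n : ℝ, 1 ≤ n → g n ≤ pstar n / n ^ ((2 : ℝ) / 3) := by
    intro n hn1
    have hn : 0 < n := lt_of_lt_of_le one_pos hn1
    have hp := (hpstar n hn).1
    have hn23 : (0 : ℝ) < n ^ ((2 : ℝ) / 3) := Real.rpow_pos_of_pos hn _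
    -- X := 1 - c^2 * n^(-2/3) is in [0,1]
    have hninv : n ^ (-((2 : ℝ) / 3)) ≤ 1 := by
      rw [Real.rpow_neg hn.le]
      apply inv_le_one_of_one_le₀
      calc (1 : ℝ) = 1 ^ ((2 : ℝ) / 3) := by rw [Real.one_rpow]
        _ ≤ n ^ ((2 : ℝ) / 3) := Real.rpow_le_rpow (by norm_num) hn1 (by norm_num)
    have hninv0 : (0 : ℝ) ≤ n ^ (-((2 : ℝ) / 3)) := (Real.rpow_pos_of_pos hn _).le
    have hX0 : (0 : ℝ) ≤ 1 - c ^ 2 * n ^ (-((2 : ℝ) / 3)) := by nlinarith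
    -- key: p^3 ≥ (3/4) * (n^2 - c^2 * n^(4/3))
    have hpu : pstar n ≤ c * n ^ ((2 : ℝ) / 3) := hub n hn
    have hp2 : (pstar n) ^ 2 ≤ c ^ 2 * (n ^ ((2 : ℝ) / 3)) ^ 2 := by
      have := mul_le_mul hpu hpu hp.le (by positivity)
      nlinarith [this]
    have h43 : (n ^ ((2 : ℝ) / 3)) ^ 2 = n ^ ((4 : ℝ) / 3) := by
      rw [← Real.rpow_natCast (n ^ ((2:ℝ)/3)) 2, ← Real.rpow_mul hn.le]
      norm_num
    have hcube : (3 / 4) * (n ^ 2 - c ^ 2 * n ^ ((4 : ℝ) / 3)) ≤ (pstar n) ^ (3 : ℕ) := by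
      have := key n hn
      rw [h43] at hp2
      nlinarith
    -- rewrite LHS as a cube
    have hXsplit : n ^ 2 - c ^ 2 * n ^ ((4 : ℝ) / 3)
        = (1 - c ^ 2 * n ^ (-((2 : ℝ) / 3))) * n ^ 2 := by
      have : n ^ (-((2 : ℝ) / 3)) * n ^ 2 = n ^ ((4 : ℝ) / 3) := by
        rw [← Real.rpow_natCast n 2, ← Real.rpow_add hn]
        norm_num
      nlinarith [this]
    have hA0 : (0 : ℝ) ≤ (3 / 4) * (n ^ 2 - c ^ 2 * n ^ ((4 : ℝ) / 3)) := by
      rw [hXsplit]; positivity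
    have h2 : ((3 / 4) * (n ^ 2 - c ^ 2 * n ^ ((4 : ℝ) / 3))) ^ ((1 : ℝ) / 3)
        ≤ ((pstar n) ^ (3 : ℕ)) ^ ((1 : ℝ) / 3) :=
      Real.rpow_le_rpow hA0 hcube (by norm_num)
    rw [cube_root _ hp.le] at h2
    have hLHS : ((3 / 4) * (n ^ 2 - c ^ 2 * n ^ ((4 : ℝ) / 3))) ^ ((1 : ℝ) / 3)
        = g n * n ^ ((2 : ℝ) / 3) := by
      rw [hXsplit, ← hc3, ← mul_assoc,
        Real.mul_rpow (by positivity) (by positivity),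
        Real.mul_rpow (by positivity) hX0,
        cube_root c hc.le, sq23 n hn, hg_def]
    rw [hLHS] at h2
    rw [le_div_iff₀ hn23]
    exact h2
  -- limits
  have hg_lim : Tendsto g atTop (nhds c) := by
    have h0 : Tendsto (fun n : ℝ => n ^ (-((2 : ℝ) / 3))) atTop (nhds 0) :=
      tendsto_rpow_neg_atTop (by norm_num)
    have h1 : Tendsto (fun n : ℝ => 1 - c ^ 2 * n ^ (-((2 : ℝ) / 3))) atTop (nhds 1) := by
      have := (tendsto_const_nhds (x := (1:ℝ)) (f := atTop)).sub
        ((tendsto_const_nhds (x := c ^ 2) (f := atTop)).mul h0)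
      simpa using this
    have h2 : Tendsto (fun n : ℝ => (1 - c ^ 2 * n ^ (-((2 : ℝ) / 3))) ^ ((1 : ℝ) / 3))
        atTop (nhds 1) := by
      have hcont : ContinuousAt (fun x : ℝ => x ^ ((1 : ℝ) / 3)) 1 :=
        Real.continuousAt_rpow_const 1 (1 / 3) (Or.inl one_ne_zero)
      have := hcont.tendsto.comp h1
      simpa [Real.one_rpow, Function.comp_def] using this
    have := (tendsto_const_nhds (x := c) (f := atTop)).mul h2
    simpa [hg_def] using this
  have hub' : ∀ᶠ n : ℝ in atTop, pstar n / n ^ ((2 : ℝ) / 3) ≤ c := by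
    filter_upwards [eventually_gt_atTop (0 : ℝ)] with n hn
    rw [div_le_iff₀ (Real.rpow_pos_of_pos hn _)]
    simpa [mul_comm] using hub n hn
  have hlb' : ∀ᶠ n : ℝ in atTop, g n ≤ pstar n / n ^ ((2 : ℝ) / 3) := by
    filter_upwards [eventually_ge_atTop (1 : ℝ)] with n hn
    exact hlb n hn
  exact tendsto_of_tendsto_of_tendsto_of_le_of_le' hg_lim tendsto_const_nhds hlb' hub'
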